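/- Let G be a group and A a finite set. Every bijective cellular automaton τ : A^G → A^G is reversible, i.e., its inverse map τ⁻¹ : A^G → A^G is also a cellular automaton. -/
import Mathlib


/-- A cellular automaton over the group `G` and the alphabet `A`. -/
def IsCellularAutomaton {G A : Type*} [Group G] (τ : (G → A) → (G → A)) : Prop :=
  ∃ (M : Finset G) (μ : (M → A) → A),
    ∀ (c : G → A) (g : G), τ c g = μ (fun m => c (g * m.1))

/-- over a finite alphabet, every bijective cellular automaton is
reversible: its inverse map is also a cellular automaton. -/
theorem stmt11 {G A : Type*} [Group G] [Fintype A]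
    (τ : (G → A) → (G → A)) (hca : IsCellularAutomaton τ)
    (hbij : Function.Bijective τ) :
    ∃ σ : (G → A) → (G → A),
      (∀ x, σ (τ x) = x) ∧ (∀ y, τ (σ y) = y) ∧ IsCellularAutomaton σ := by
  classical
  obtain ⟨M₀, μ₀, hμ₀⟩ := hca
  by_cases hA : Nonempty A
  · haveI : Inhabited A := Classical.inhabited_of_nonempty hA
    letI : TopologicalSpace A := ⊥
    haveI : DiscreteTopology A := ⟨rfl⟩
    set e := Equiv.ofBijective τ hbij with he
    have hcont : Continuous τ := by
      apply continuous_pi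
      intro g
      have h1 : Continuous (fun c : G → A => (fun m : M₀ => c (g * m.1))) :=
        continuous_pi fun m => continuous_apply _
      have h2 : Continuous μ₀ := continuous_of_discreteTopology
      have heq : (fun c => τ c g)
          = μ₀ ∘ (fun c : G → A => (fun m : M₀ => c (g * m.1))) := by
        funext c; exact hμ₀ c g
      rw [heq]; exact h2.comp h1
    have hconte : Continuous e := hcont
    let H : (G → A) ≃ₜ (G → A) := hconte.homeoOfEquivCompactToT2
    set σ : (G → A) → (G → A) := (e.symm : (G → A) → (G → A)) with hσ
    have hσcont : Continuous σ := H.symm.continuous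
    have hτσ : ∀ y, τ (σ y) = y := fun y => e.apply_symm_apply y
    -- equivariance of τ
    have hτeq : ∀ (g : G) (c : G → A),
        τ (fun h => c (g * h)) = fun h => τ c (g * h) := by
      intro g c; funext g'
      rw [hμ₀, hμ₀]
      congr 1; funext m; rw [mul_assoc]
    -- equivariance of σ
    have hσeq : ∀ (g : G) (c : G → A),
        σ (fun h => c (g * h)) = fun h => σ c (g * h) := by
      intro g c
      apply hbij.1
      rw [hτσ, hτeq g (σ c), hτσ]
    set f : (G → A) → A := fun c => σ c 1 with hf
    have hfcont : Continuous f := (continuous_apply (1 : G)).comp hσcont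
    -- local constancy of f
    have key : ∀ c : G → A, ∃ I : Finset G,
        ∀ c' : G → A, (∀ i ∈ I, c' i = c i) → f c' = f c := by
      intro c
      have hopen : IsOpen (f ⁻¹' {f c}) :=
        hfcont.isOpen_preimage _ (isOpen_discrete _)
      rw [isOpen_pi_iff] at hopen
      obtain ⟨I, u, hu, hsub⟩ := hopen c rfl
      refine ⟨I, fun c' hc' => ?_⟩
      have : c' ∈ (I : Set G).pi u := by
        intro i hi
        rw [hc' i hi]
        exact (hu i hi).2
      exact hsub this
    choose I hI using key
    set U : (G → A) → Set (G → A) := fun c => {c' | ∀ i ∈ I c, c' i = c i} with hU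
    have hUopen : ∀ c, IsOpen (U c) := by
      intro c
      have : U c = ⋂ i ∈ I c, (fun c' : G → A => c' i) ⁻¹' {c i} := by
        ext c'; simp [hU]
      rw [this]
      exact isOpen_biInter_finset fun i _ =>
        (continuous_apply i).isOpen_preimage _ (isOpen_discrete _)
    have hcover : (Set.univ : Set (G → A)) ⊆ ⋃ c, U c := by
      intro c _
      exact Set.mem_iUnion.2 ⟨c, fun i _ => rfl⟩
    obtain ⟨t, ht⟩ := isCompact_univ.elim_finite_subcover U hUopen hcover
    set M : Finset G := t.biUnion I with hM
    have hMf : ∀ c c' : G → A, (∀ m ∈ M, c' m = c m) → f c' = f c := by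
      intro c c' hcc
      obtain ⟨c₀, hc₀t, hc₀⟩ : ∃ c₀ ∈ t, c ∈ U c₀ := by
        have := ht (Set.mem_univ c)
        simpa using this
      have hc' : c' ∈ U c₀ := by
        intro i hi
        have hiM : i ∈ M := Finset.mem_biUnion.2 ⟨c₀, hc₀t, hi⟩
        rw [hcc i hiM]
        exact hc₀ i hi
      rw [hI c₀ c' hc', hI c₀ c hc₀]
    set μ : (M → A) → A :=
      fun p => f (fun h => if hh : h ∈ M then p ⟨h, hh⟩ else default) with hμ
    refine ⟨σ, fun x => e.symm_apply_apply x, hτσ, M, μ, ?_⟩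
    intro c g
    have h1 : σ c g = f (fun h => c (g * h)) := by
      have := congrFun (hσeq g c) 1
      rw [hf]
      simp only at this ⊢
      rw [this, mul_one]
    have h2 : μ (fun m => c (g * m.1))
        = f (fun h => if hh : h ∈ M then c (g * h) else default) := rfl
    rw [h1, h2]
    apply (hMf (fun h => c (g * h)) _ ?_).symm
    intro m hm
    simp [hm]
  · -- A is empty; then there are no configurations at all (or no μ exists)
    refine ⟨τ, ?_, ?_, M₀, μ₀, hμ₀⟩ <;>
      · intro x
        exact absurd ⟨μ₀ (fun m => x m.1)⟩ hA
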